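/- (Validity of the maximally-loaded-stations dominance rule.) There exists an optimal feasible U-line balance (S₁, …, S_m; σ) of T in which every station is maximally loaded: for every station index k < m, there is no task j assigned to a station later than k such that t_j ≤ c − ∑_{i∈S_k} t_i and j is available with respect to the assigned set A_k = S₁∪…∪S_k (i.e., every predecessor of j lies in A_k, or every successor of j lies in A_k). Equivalently, any feasible U-line balance containing a station that is not maximally loaded is dominated by a feasible U-line balance with no more stations in which all stations are maximally loaded. -/

import Mathlib

open Finset

/-- A feasible U-line balance of the task set `T`: stations `B` in order,
underlying task ordering `σ = B.flatten`, where every task must be forward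
available (all its predecessors occur earlier in `σ`) or backward available
(all its successors occur earlier in `σ`) at its position. -/
def IsUBalance {ι : Type*} (T : Finset ι) (t : ι → ℕ) (c : ℕ)
    (prec : ι → ι → Prop) (B : List (List ι)) : Prop :=
  B.flatten.Nodup ∧
  (∀ j, j ∈ B.flatten ↔ j ∈ T) ∧
  (∀ b ∈ B, b ≠ [] ∧ (b.map t).sum ≤ c) ∧
  ∀ i (h : i < B.flatten.length),
    (∀ k ∈ T, prec k (B.flatten.get ⟨i, h⟩) → k ∈ B.flatten.take i) ∨
    (∀ k ∈ T, prec (B.flatten.get ⟨i, h⟩) k → k ∈ B.flatten.take i)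

/-- Task `j` is available with respect to the set `A` of already assigned tasks:
every predecessor of `j` lies in `A`, or every successor of `j` lies in `A`. -/
def AvailWrt {ι : Type*} (T : Finset ι) (prec : ι → ι → Prop)
    (A : List ι) (j : ι) : Prop :=
  (∀ i ∈ T, prec i j → i ∈ A) ∨ (∀ i ∈ T, prec j i → i ∈ A)

/-- Every station of the balance `B` is maximally loaded: for every station
index `k`, there is no task `j` assigned to a later station that would still fit
in station `k` (`t j` at most the idle time of station `k`) and is available
with respect to the set of tasks assigned to stations `1, …, k`. -/
def MaximallyLoaded {ι : Type*} (T : Finset ι) (t : ι → ℕ) (c : ℕ)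
    (prec : ι → ι → Prop) (B : List (List ι)) : Prop :=
  ∀ (k : ℕ) (hk : k < B.length), ∀ j ∈ (B.drop (k + 1)).flatten,
    ¬ (((B.get ⟨k, hk⟩).map t).sum + t j ≤ c ∧
        AvailWrt T prec ((B.take (k + 1)).flatten) j)

namespace MLAux


variable {ι : Type*}

def Feas (T : Finset ι) (prec : ι → ι → Prop) (σ : List ι) : Prop :=
  ∀ P (x : ι) S, σ = P ++ x :: S →
    (∀ k ∈ T, prec k x → k ∈ P) ∨ (∀ k ∈ T, prec x k → k ∈ P)

lemma feas_iff (T : Finset ι) (prec : ι → ι → Prop) (σ : List ι) :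
    (∀ i (h : i < σ.length),
      (∀ k ∈ T, prec k (σ.get ⟨i, h⟩) → k ∈ σ.take i) ∨
      (∀ k ∈ T, prec (σ.get ⟨i, h⟩) k → k ∈ σ.take i)) ↔ Feas T prec σ := by
  constructor
  · intro h P x S hd
    have hlen : P.length < σ.length := by subst hd; simp
    have hx : σ.get ⟨P.length, hlen⟩ = x := by
      subst hd
      simp [List.get_eq_getElem, List.getElem_append_right (le_refl P.length)]
    have htk : σ.take P.length = P := by subst hd; exact List.take_left
    have := h P.length hlen
    rw [hx, htk] at this
    exact this
  · intro h i hi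
    have hd : σ = σ.take i ++ σ.get ⟨i, hi⟩ :: σ.drop (i + 1) := by
      conv_lhs => rw [← List.take_append_drop i σ]
      rw [List.drop_eq_getElem_cons hi]
      rfl
    exact h _ _ _ hd

lemma feas_move (T : Finset ι) (prec : ι → ι → Prop) (A R₁ R₂ : List ι) (j : ι)
    (hF : Feas T prec (A ++ (R₁ ++ j :: R₂)))
    (hA : AvailWrt T prec A j) :
    Feas T prec (A ++ j :: (R₁ ++ R₂)) := by
  intro P x S hPS
  have key : ∀ (P₀ S₀ : List ι), A ++ (R₁ ++ j :: R₂) = P₀ ++ x :: S₀ →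
      (∀ a ∈ P₀, a ∈ P) →
      (∀ k ∈ T, prec k x → k ∈ P) ∨ (∀ k ∈ T, prec x k → k ∈ P) := by
    intro P₀ S₀ h hsub
    rcases hF P₀ x S₀ h with h1 | h1
    · exact Or.inl fun k hk hp => hsub _ (h1 k hk hp)
    · exact Or.inr fun k hk hp => hsub _ (h1 k hk hp)
  have keyj : x = j → (∀ a ∈ A, a ∈ P) →
      (∀ k ∈ T, prec k x → k ∈ P) ∨ (∀ k ∈ T, prec x k → k ∈ P) := by
    rintro rfl hsub
    rcases hA with h1 | h1
    · exact Or.inl fun k hk hp => hsub _ (h1 k hk hp)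
    · exact Or.inr fun k hk hp => hsub _ (h1 k hk hp)
  rcases List.append_eq_append_iff.mp hPS with ⟨a', ha1, ha2⟩ | ⟨c', hc1, hc2⟩
  · cases a' with
    | nil =>
      simp only [List.nil_append] at ha2
      injection ha2 with h1 h2
      exact keyj h1.symm (by simp [ha1])
    | cons j' tl =>
      simp only [List.cons_append] at ha2
      injection ha2 with h1 h2
      subst h1
      rcases List.append_eq_append_iff.mp h2 with ⟨u, hu1, hu2⟩ | ⟨v, hv1, hv2⟩
      · refine key (A ++ (R₁ ++ j :: u)) S ?_ ?_
        · rw [hu2]; simp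
        · intro a ha
          rw [ha1, hu1]
          simp only [List.mem_append, List.mem_cons] at ha ⊢
          tauto
      · cases v with
        | nil =>
          simp only [List.append_nil] at hv1
          subst hv1
          simp only [List.nil_append] at hv2
          refine key (A ++ (R₁ ++ [j])) S ?_ ?_
          · rw [← hv2]; simp
          · intro a ha
            rw [ha1]
            simp only [List.mem_append, List.mem_cons] at ha ⊢
            tauto
        | cons x' v' =>
          simp only [List.cons_append] at hv2
          injection hv2 with h3 h4
          subst h3 h4
          refine key (A ++ tl) (v' ++ j :: R₂) ?_ ?_
          · rw [hv1]; simp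
          · intro a ha
            rw [ha1]
            simp only [List.mem_append, List.mem_cons] at ha ⊢
            tauto
  · cases c' with
    | nil =>
      simp only [List.append_nil] at hc1
      simp only [List.nil_append] at hc2
      injection hc2 with h1 h2
      exact keyj h1 (by rw [hc1]; exact fun a ha => ha)
    | cons x' c₂ =>
      simp only [List.cons_append] at hc2
      injection hc2 with h1 h2
      subst h1
      refine key P (c₂ ++ (R₁ ++ j :: R₂)) ?_ (fun a ha => ha)
      rw [hc1]; simp



def mu : List (List ι) → ℕ
  | [] => 0
  | _ :: rest => rest.flatten.length + mu rest

lemma mu_append (X Y : List (List ι)) :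
    mu (X ++ Y) = mu X + X.length * Y.flatten.length + mu Y := by
  induction X with
  | nil => simp [mu]
  | cons s X ih =>
    simp only [List.cons_append, mu, List.append_eq, ih, List.flatten_append,
      List.length_append, List.length_cons]
    ring

lemma mu_lt_of (C : List (List ι)) (s s' : List ι) (E E' : List (List ι))
    (hf : E'.flatten.length + 1 = E.flatten.length)
    (hmu : mu E' ≤ mu E)
    (hK : (s' :: E').flatten.length = (s :: E).flatten.length) :
    mu (C ++ s' :: E') < mu (C ++ s :: E) := by
  rw [mu_append, mu_append, hK]
  have h2 : mu (s' :: E') < mu (s :: E) := by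
    simp only [mu]; omega
  exact Nat.add_lt_add_left h2 _

lemma mu_le_cons (D₁ D₂ : List (List ι)) (b b' : List ι) (h : b'.length ≤ b.length) :
    mu (D₁ ++ b' :: D₂) ≤ mu (D₁ ++ b :: D₂) := by
  rw [mu_append, mu_append]
  have h1 : mu (b' :: D₂) = mu (b :: D₂) := by simp [mu]
  have h2 : D₁.length * (b' :: D₂).flatten.length ≤ D₁.length * (b :: D₂).flatten.length :=
    Nat.mul_le_mul_left _ (by simp; omega)
  rw [h1]
  exact Nat.add_le_add (Nat.add_le_add le_rfl h2) le_rfl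

lemma mu_le_drop (D₁ D₂ : List (List ι)) (b : List ι) :
    mu (D₁ ++ D₂) ≤ mu (D₁ ++ b :: D₂) := by
  rw [mu_append, mu_append]
  have h2 : D₁.length * D₂.flatten.length ≤ D₁.length * (b :: D₂).flatten.length :=
    Nat.mul_le_mul_left _ (by simp)
  have h3 : mu D₂ ≤ mu (b :: D₂) := by
    simp only [mu]; exact Nat.le_add_left _ _
  exact Nat.add_le_add (Nat.add_le_add le_rfl h2) h3



lemma step (T : Finset ι) (t : ι → ℕ) (c : ℕ) (prec : ι → ι → Prop)
    (C : List (List ι)) (s : List ι) (D₁ D₂ : List (List ι)) (b₁ b₂ : List ι) (j : ι)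
    (hB : IsUBalance T t c prec (C ++ s :: (D₁ ++ (b₁ ++ j :: b₂) :: D₂)))
    (hfit : (s.map t).sum + t j ≤ c)
    (havail : AvailWrt T prec (C.flatten ++ s) j) :
    ∃ B', IsUBalance T t c prec B' ∧
      B'.length ≤ (C ++ s :: (D₁ ++ (b₁ ++ j :: b₂) :: D₂)).length ∧
      mu B' < mu (C ++ s :: (D₁ ++ (b₁ ++ j :: b₂) :: D₂)) := by
  classical
  obtain ⟨hnd, hmem, hst, hfeas⟩ := hB
  set E' : List (List ι) :=
    if b₁ ++ b₂ = [] then D₁ ++ D₂ else D₁ ++ (b₁ ++ b₂) :: D₂ with hE'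
  have hE'f : E'.flatten = D₁.flatten ++ ((b₁ ++ b₂) ++ D₂.flatten) := by
    rw [hE']; split_ifs with h0
    · simp [h0]
    · simp
  have hE'len : E'.length ≤ D₁.length + 1 + D₂.length := by
    rw [hE']; split_ifs <;> simp <;> omega
  have hE'st : ∀ b ∈ E', b ∈ D₁ ++ (b₁ ++ j :: b₂) :: D₂ ∨ (b = b₁ ++ b₂ ∧ b ≠ []) := by
    intro b hb
    rw [hE'] at hb; split_ifs at hb with h0
    · rcases List.mem_append.mp hb with h | h
      · exact Or.inl (List.mem_append_left _ h)
      · exact Or.inl (List.mem_append_right _ (List.mem_cons_of_mem _ h))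
    · rcases List.mem_append.mp hb with h | h
      · exact Or.inl (List.mem_append_left _ h)
      · rcases List.mem_cons.mp h with rfl | h
        · exact Or.inr ⟨rfl, h0⟩
        · exact Or.inl (List.mem_append_right _ (List.mem_cons_of_mem _ h))
  have hnewf : (C ++ (s ++ [j]) :: E').flatten
      = (C.flatten ++ s) ++ j :: ((D₁.flatten ++ b₁) ++ (b₂ ++ D₂.flatten)) := by
    simp [hE'f]
  have holdf : (C ++ s :: (D₁ ++ (b₁ ++ j :: b₂) :: D₂)).flatten
      = (C.flatten ++ s) ++ ((D₁.flatten ++ b₁) ++ j :: (b₂ ++ D₂.flatten)) := by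
    simp
  have hperm : (C ++ s :: (D₁ ++ (b₁ ++ j :: b₂) :: D₂)).flatten.Perm
      (C ++ (s ++ [j]) :: E').flatten := by
    rw [hnewf, holdf]
    exact List.Perm.append_left _ List.perm_middle
  have hFold : Feas T prec
      ((C.flatten ++ s) ++ ((D₁.flatten ++ b₁) ++ j :: (b₂ ++ D₂.flatten))) := by
    rw [← holdf]
    exact (feas_iff T prec _).mp hfeas
  have hFnew := feas_move T prec _ _ _ j hFold havail
  refine ⟨C ++ (s ++ [j]) :: E', ⟨?_, ?_, ?_, ?_⟩, ?_, ?_⟩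
  · exact (hperm.nodup_iff).mp hnd
  · intro a; rw [← hperm.mem_iff]; exact hmem a
  · intro b hb
    rcases List.mem_append.mp hb with h | h
    · exact hst b (List.mem_append_left _ h)
    · rcases List.mem_cons.mp h with rfl | h
      · refine ⟨by simp, by simpa using hfit⟩
      · rcases hE'st b h with h | ⟨rfl, hne⟩
        · exact hst b (List.mem_append_right _ (List.mem_cons_of_mem _ h))
        · refine ⟨hne, ?_⟩
          have := (hst (b₁ ++ j :: b₂) (List.mem_append_right _
            (List.mem_cons_of_mem _ (List.mem_append_right _ List.mem_cons_self)))).2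
          simp only [List.map_append, List.map_cons, List.sum_append, List.sum_cons] at this ⊢
          omega
  · refine (feas_iff T prec _).mpr ?_
    rw [hnewf]
    exact hFnew
  · simp only [List.length_append, List.length_cons]
    omega
  · refine mu_lt_of C s (s ++ [j]) _ E' ?_ ?_ ?_
    · rw [hE'f]; simp; omega
    · rw [hE']; split_ifs with h0
      · exact mu_le_drop D₁ D₂ _
      · exact mu_le_cons D₁ D₂ _ _ (by simp)
    · rw [List.flatten_cons, List.flatten_cons, hE'f]
      simp; omega



lemma step' (T : Finset ι) (t : ι → ℕ) (c : ℕ) (prec : ι → ι → Prop)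
    (B : List (List ι)) (hB : IsUBalance T t c prec B)
    (hnot : ¬ MaximallyLoaded T t c prec B) :
    ∃ B'', IsUBalance T t c prec B'' ∧ B''.length ≤ B.length ∧ mu B'' < mu B := by
  simp only [MaximallyLoaded] at hnot
  push_neg at hnot
  obtain ⟨k, hk, j, hj, hfit, havail⟩ := hnot
  have hBdec : B = B.take k ++ (B.get ⟨k, hk⟩) :: (B.drop (k + 1)) := by
    conv_lhs => rw [← List.take_append_drop k B]
    rw [List.drop_eq_getElem_cons hk]
    rfl
  obtain ⟨b, hbD, hjb⟩ := List.mem_flatten.mp hj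
  obtain ⟨D₁, D₂, hD⟩ := List.append_of_mem hbD
  obtain ⟨b₁, b₂, hb12⟩ := List.append_of_mem hjb
  have htake : (B.take (k + 1)).flatten = (B.take k).flatten ++ B.get ⟨k, hk⟩ := by
    rw [List.take_succ, List.getElem?_eq_getElem hk]
    simp only [Option.toList_some, List.flatten_append, List.flatten_cons, List.flatten_nil,
      List.append_nil, List.get_eq_getElem]
  have hBdec2 : B = B.take k ++ (B.get ⟨k, hk⟩) :: (D₁ ++ (b₁ ++ j :: b₂) :: D₂) := by
    rw [← hb12, ← hD]
    exact hBdec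
  rw [htake] at havail
  have hB2 := hB
  rw [hBdec2] at hB2
  obtain ⟨B'', h1, h2, h3⟩ :=
    step T t c prec (B.take k) (B.get ⟨k, hk⟩) D₁ D₂ b₁ b₂ j hB2 hfit havail
  refine ⟨B'', h1, ?_, ?_⟩
  · rw [hBdec2]; exact h2
  · rw [hBdec2]; exact h3

lemma main (T : Finset ι) (t : ι → ℕ) (c : ℕ) (prec : ι → ι → Prop) :
    ∀ n (B : List (List ι)), mu B ≤ n → IsUBalance T t c prec B →
    ∃ B', IsUBalance T t c prec B' ∧ B'.length ≤ B.length ∧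
      MaximallyLoaded T t c prec B' := by
  intro n
  induction n with
  | zero =>
    intro B hmu hB
    by_cases hML : MaximallyLoaded T t c prec B
    · exact ⟨B, hB, le_rfl, hML⟩
    · obtain ⟨B'', _, _, h3⟩ := step' T t c prec B hB hML
      omega
  | succ n ih =>
    intro B hmu hB
    by_cases hML : MaximallyLoaded T t c prec B
    · exact ⟨B, hB, le_rfl, hML⟩
    · obtain ⟨B'', h1, h2, h3⟩ := step' T t c prec B hB hML
      obtain ⟨B', g1, g2, g3⟩ := ih B'' (by omega) h1
      exact ⟨B', g1, le_trans g2 h2, g3⟩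

end MLAux

/-- Validity of the maximally-loaded-stations dominance rule:
provided some feasible U-line balance exists, there exists an optimal feasible
U-line balance all of whose stations are maximally loaded; equivalently, every
feasible U-line balance is dominated by a feasible U-line balance with no more
stations in which all stations are maximally loaded. -/


theorem maximally_loaded_dominance {ι : Type*} [DecidableEq ι]
    (T : Finset ι) (t : ι → ℕ) (c : ℕ) (hc : 0 < c)
    (ht : ∀ j ∈ T, 0 < t j) (htc : ∀ j ∈ T, t j ≤ c)
    (prec : ι → ι → Prop)
    (hacyc : ∀ j, ¬ Relation.TransGen prec j j)
    (hex : ∃ B : List (List ι), IsUBalance T t c prec B) :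
    (∃ B : List (List ι), IsUBalance T t c prec B ∧
        (∀ B' : List (List ι), IsUBalance T t c prec B' →
          B.length ≤ B'.length) ∧
        MaximallyLoaded T t c prec B) ∧
    (∀ B : List (List ι), IsUBalance T t c prec B →
      ∃ B' : List (List ι), IsUBalance T t c prec B' ∧
        B'.length ≤ B.length ∧ MaximallyLoaded T t c prec B') := by
  classical
  have main2 : ∀ B : List (List ι), IsUBalance T t c prec B →
      ∃ B', IsUBalance T t c prec B' ∧ B'.length ≤ B.length ∧
        MaximallyLoaded T t c prec B' :=
    fun B hB => MLAux.main T t c prec (MLAux.mu B) B le_rfl hB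
  refine ⟨?_, main2⟩
  obtain ⟨B0, hB0⟩ := hex
  have hP : ∃ n, ∃ B : List (List ι), IsUBalance T t c prec B ∧ B.length = n :=
    ⟨B0.length, B0, hB0, rfl⟩
  obtain ⟨Bm, hBm, hlen⟩ := Nat.find_spec hP
  obtain ⟨B', h1, h2, h3⟩ := main2 Bm hBm
  refine ⟨B', h1, fun B'' hB'' => ?_, h3⟩
  calc B'.length ≤ Bm.length := h2
    _ = Nat.find hP := hlen
    _ ≤ B''.length := Nat.find_min' hP ⟨B'', hB'', rfl⟩
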